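/- For each N ≥ 2 let F_N be an isotropic random continuous field on S^N which is P-almost surely nonnegative, and suppose there is K > 0 with E[F_N(𝐧)] ≤ K·√N for all N. Assume there exists α > 0 such that: (1) for every c, δ > 0 there exist c₁ > 0 and C₁ > 0 with P( |F_N(𝐧) − E[F_N(𝐧)]| ≥ c·N^{1/2+δ} ) ≤ C₁·exp(−c₁·N^{1+2δ}) for all N; and (2') for every c, δ > 0 there exist c₂ > 0 and C₂ > 0 with P( sup{ |F_N(x)² − F_N(y)²| : x, y ∈ S^N, R(x,y) ≥ 1 − N^{−α} } ≥ c·N^{1+2δ} ) ≤ C₂·exp(−c₂·N^{1+2δ}) for all N. Then for every c, δ > 0 there exist f > 0 and C > 0 such that for all N, P( sup_{x ∈ S^N} F_N(x) ≥ c·N^{1/2+δ} ) ≤ C·exp(−f·N^{1+2δ}). -/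

import Mathlib

open MeasureTheory
open scoped ENNReal

/-- The sphere `S^N` of radius `√N` in `ℝ^N`. -/
noncomputable def sphereN (N : ℕ) : Set (EuclideanSpace ℝ (Fin N)) :=
  Metric.sphere (0 : EuclideanSpace ℝ (Fin N)) (Real.sqrt N)

/-- The north pole `𝐧 = (√N, 0, …, 0) ∈ S^N`. -/
noncomputable def nPole (N : ℕ) (hN : 0 < N) : sphereN N :=
  ⟨EuclideanSpace.single (⟨0, hN⟩ : Fin N) (Real.sqrt N), by
    simp [sphereN, mem_sphere_iff_norm, EuclideanSpace.norm_single,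
      abs_of_nonneg (Real.sqrt_nonneg (N : ℝ))]⟩

/-- A linear isometry (in particular, an orthogonal map) of `ℝ^N` restricted to the
sphere `S^N`. -/
noncomputable def sphereMap {N : ℕ}
    (O : EuclideanSpace ℝ (Fin N) ≃ₗᵢ[ℝ] EuclideanSpace ℝ (Fin N)) (x : sphereN N) :
    sphereN N :=
  ⟨O x, by
    have hx : ‖(x : EuclideanSpace ℝ (Fin N))‖ = Real.sqrt N := by
      simpa [sphereN, mem_sphere_iff_norm] using x.2
    simp [sphereN, mem_sphere_iff_norm, O.norm_map, hx]⟩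

/-- The overlap `R(x,y) = (1/N) Σᵢ xᵢ yᵢ` of two points of `S^N`. -/
noncomputable def overlap {N : ℕ} (x y : sphereN N) : ℝ :=
  (inner ℝ (x : EuclideanSpace ℝ (Fin N)) (y : EuclideanSpace ℝ (Fin N)) : ℝ) / N

lemma norm_sphereN {N : ℕ} (x : sphereN N) :
    ‖(x : EuclideanSpace ℝ (Fin N))‖ = Real.sqrt N := by
  simpa [sphereN, mem_sphere_iff_norm] using x.2

lemma card_le_of_separated (N : ℕ) (hN : 1 ≤ N) (ε : ℝ) (hε : 0 < ε)
    (T : Finset (EuclideanSpace ℝ (Fin N)))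
    (hT : ∀ t ∈ T, t ∈ sphereN N)
    (hsep : ∀ s ∈ T, ∀ t ∈ T, s ≠ t → ε ≤ dist s t) :
    (T.card : ℝ) ≤ ((Real.sqrt N + ε / 2) / (ε / 2)) ^ N := by
  haveI : Nonempty (Fin N) := ⟨⟨0, hN⟩⟩
  haveI : Nontrivial (EuclideanSpace ℝ (Fin N)) := by infer_instance
  have hdisj : (T : Set (EuclideanSpace ℝ (Fin N))).PairwiseDisjoint
      (fun t => Metric.ball t (ε / 2)) := by
    intro a ha b hb hab
    apply Metric.ball_disjoint_ball
    rw [← add_div, add_self_div_two]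
    exact hsep a (by simpa using ha) b (by simpa using hb) hab
  have hsub : ∀ t ∈ T, Metric.ball t (ε / 2) ⊆
      Metric.ball (0 : EuclideanSpace ℝ (Fin N)) (Real.sqrt N + ε / 2) := by
    intro t ht y hy
    have h1 : dist t 0 = Real.sqrt N := by
      simpa [sphereN, Metric.mem_sphere] using hT t ht
    have h2 : dist y t < ε / 2 := hy
    have := dist_triangle y t 0
    simp only [Metric.mem_ball]
    rw [h1] at this
    linarith
  have hfr : Module.finrank ℝ (EuclideanSpace ℝ (Fin N)) = N := finrank_euclideanSpace_fin
  have hsum : volume (⋃ t ∈ T, Metric.ball t (ε / 2)) = ∑ t ∈ T, volume (Metric.ball t (ε / 2)) :=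
    measure_biUnion_finset hdisj (fun t _ => measurableSet_ball)
  have hball : ∀ t : EuclideanSpace ℝ (Fin N), volume (Metric.ball t (ε / 2)) =
      ENNReal.ofReal ((ε / 2) ^ N) * volume (Metric.ball (0 : EuclideanSpace ℝ (Fin N)) 1) := by
    intro t
    rw [Measure.addHaar_ball volume t (by positivity : (0:ℝ) ≤ ε / 2), hfr]
  have hle : (T.card : ℝ≥0∞) * ENNReal.ofReal ((ε / 2) ^ N)
        * volume (Metric.ball (0 : EuclideanSpace ℝ (Fin N)) 1)
      ≤ ENNReal.ofReal ((Real.sqrt N + ε / 2) ^ N)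
        * volume (Metric.ball (0 : EuclideanSpace ℝ (Fin N)) 1) := by
    calc (T.card : ℝ≥0∞) * ENNReal.ofReal ((ε / 2) ^ N)
          * volume (Metric.ball (0 : EuclideanSpace ℝ (Fin N)) 1)
        = ∑ t ∈ T, volume (Metric.ball t (ε / 2)) := by
          rw [Finset.sum_congr rfl (fun t _ => hball t), Finset.sum_const, nsmul_eq_mul, mul_assoc]
      _ = volume (⋃ t ∈ T, Metric.ball t (ε / 2)) := hsum.symm
      _ ≤ volume (Metric.ball (0 : EuclideanSpace ℝ (Fin N)) (Real.sqrt N + ε / 2)) :=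
          measure_mono (Set.iUnion₂_subset hsub)
      _ = ENNReal.ofReal ((Real.sqrt N + ε / 2) ^ N)
          * volume (Metric.ball (0 : EuclideanSpace ℝ (Fin N)) 1) := by
          rw [Measure.addHaar_ball volume 0 (by positivity : (0:ℝ) ≤ Real.sqrt N + ε / 2), hfr]
  have hv0 : volume (Metric.ball (0 : EuclideanSpace ℝ (Fin N)) 1) ≠ 0 :=
    (Metric.measure_ball_pos volume 0 one_pos).ne'
  have hvt : volume (Metric.ball (0 : EuclideanSpace ℝ (Fin N)) 1) ≠ ⊤ := measure_ball_lt_top.ne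
  have hle2 : (T.card : ℝ≥0∞) * ENNReal.ofReal ((ε / 2) ^ N) ≤
      ENNReal.ofReal ((Real.sqrt N + ε / 2) ^ N) :=
    (ENNReal.mul_le_mul_iff_left hv0 hvt).mp hle
  have hεN : (0:ℝ) < (ε/2)^N := by positivity
  have := ENNReal.toReal_mono (by simp) hle2
  rw [ENNReal.toReal_mul, ENNReal.toReal_ofReal hεN.le, ENNReal.toReal_ofReal (by positivity),
    ENNReal.toReal_natCast] at this
  rw [div_pow, le_div_iff₀ hεN]
  exact this

lemma exists_net (N : ℕ) (hN : 1 ≤ N) (ε : ℝ) (hε : 0 < ε) :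
    ∃ T : Finset (EuclideanSpace ℝ (Fin N)),
      (∀ t ∈ T, t ∈ sphereN N) ∧ (∀ x ∈ sphereN N, ∃ t ∈ T, dist x t ≤ ε) ∧
      (T.card : ℝ) ≤ ((Real.sqrt N + ε / 2) / (ε / 2)) ^ N := by
  classical
  set s : Set ℕ := {n : ℕ | ∃ T : Finset (EuclideanSpace ℝ (Fin N)),
    (∀ t ∈ T, t ∈ sphereN N) ∧ (∀ a ∈ T, ∀ b ∈ T, a ≠ b → ε ≤ dist a b) ∧ T.card = n} with hs
  have h0 : 0 ∈ s := ⟨∅, by simp⟩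
  have hbdd : BddAbove s := by
    refine ⟨Nat.ceil (((Real.sqrt N + ε / 2) / (ε / 2)) ^ N), ?_⟩
    rintro n ⟨T, hT, hsep, rfl⟩
    have h1 : (T.card : ℝ) ≤ ((Real.sqrt N + ε / 2) / (ε / 2)) ^ N :=
      card_le_of_separated N hN ε hε T hT hsep
    exact_mod_cast h1.trans (Nat.le_ceil _)
  have hmem : sSup s ∈ s := Nat.sSup_mem ⟨0, h0⟩ hbdd
  obtain ⟨T, hT, hsep, hcard⟩ := hmem
  refine ⟨T, hT, ?_, hcard ▸ card_le_of_separated N hN ε hε T hT hsep⟩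
  intro x hx
  by_contra hcon
  push_neg at hcon
  have hxT : x ∉ T := by
    intro hmem
    have := hcon x hmem
    simp at this
    linarith
  have hins : (sSup s) + 1 ∈ s := by
    refine ⟨insert x T, ?_, ?_, ?_⟩
    · intro t ht
      rcases Finset.mem_insert.mp ht with h | h
      · exact h ▸ hx
      · exact hT t h
    · intro a ha b hb hab
      rcases Finset.mem_insert.mp ha with h1 | h1 <;> rcases Finset.mem_insert.mp hb with h2 | h2
      · exact absurd (h1.trans h2.symm) hab
      · exact h1 ▸ (hcon b h2).le
      · rw [dist_comm]; exact h2 ▸ (hcon a h1).le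
      · exact hsep a h1 b h2 hab
    · rw [Finset.card_insert_of_notMem hxT, hcard]
  have := le_csSup hbdd hins
  omega

lemma overlap_of_dist_le {N : ℕ} (hN : 1 ≤ N) (α : ℝ) (x y : sphereN N)
    (h : dist (x : EuclideanSpace ℝ (Fin N)) (y : EuclideanSpace ℝ (Fin N))
      ≤ Real.sqrt (2 * (N : ℝ) ^ ((1:ℝ) - α))) :
    1 - (N : ℝ) ^ (-α) ≤ overlap x y := by
  have hNpos : (0:ℝ) < N := by exact_mod_cast hN
  have hsq : ‖(x : EuclideanSpace ℝ (Fin N)) - y‖ ^ 2 ≤ 2 * (N : ℝ) ^ ((1:ℝ) - α) := by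
    have h1 : ‖(x : EuclideanSpace ℝ (Fin N)) - y‖ ≤ Real.sqrt (2 * (N : ℝ) ^ ((1:ℝ) - α)) := by
      rwa [dist_eq_norm] at h
    calc ‖(x : EuclideanSpace ℝ (Fin N)) - y‖ ^ 2
        ≤ Real.sqrt (2 * (N : ℝ) ^ ((1:ℝ) - α)) ^ 2 :=
          pow_le_pow_left₀ (norm_nonneg _) h1 2
      _ = 2 * (N : ℝ) ^ ((1:ℝ) - α) := Real.sq_sqrt (by positivity)
  have hns : ‖(x : EuclideanSpace ℝ (Fin N)) - y‖ ^ 2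
      = ‖(x : EuclideanSpace ℝ (Fin N))‖ ^ 2
        - 2 * (inner ℝ (x : EuclideanSpace ℝ (Fin N)) (y : EuclideanSpace ℝ (Fin N)) : ℝ)
        + ‖(y : EuclideanSpace ℝ (Fin N))‖ ^ 2 := norm_sub_sq_real _ _
  rw [norm_sphereN, norm_sphereN, Real.sq_sqrt hNpos.le] at hns
  have hinner : (N:ℝ) - (N : ℝ) ^ ((1:ℝ) - α)
      ≤ (inner ℝ (x : EuclideanSpace ℝ (Fin N)) (y : EuclideanSpace ℝ (Fin N)) : ℝ) := by
    nlinarith [hsq, hns]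
  have hexp : (N : ℝ) ^ ((1:ℝ) - α) = N * (N : ℝ) ^ (-α) := by
    rw [sub_eq_add_neg, Real.rpow_add hNpos, Real.rpow_one]
  rw [hexp] at hinner
  rw [overlap, le_div_iff₀ hNpos]
  nlinarith [hinner]

lemma exists_bound_modset {N : ℕ} (hN : 1 ≤ N) (g : sphereN N → ℝ) (hg : Continuous g) :
    ∃ M : ℝ, ∀ x : sphereN N, |g x| ≤ M := by
  haveI : CompactSpace (sphereN N) :=
    isCompact_iff_compactSpace.mp (isCompact_sphere _ _)
  haveI : Nonempty (sphereN N) := ⟨nPole N (by omega)⟩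
  obtain ⟨z, hz⟩ := hg.abs.exists_forall_ge (by simp [Filter.cocompact_eq_bot])
  exact ⟨|g z|, hz⟩

lemma law_transfer {N : ℕ} (hN : 0 < N) {Ω : Type} [MeasurableSpace Ω] (μ : Measure Ω)
    (F : Ω → sphereN N → ℝ) (hmeas : Measurable F)
    (hiso : ∀ O : EuclideanSpace ℝ (Fin N) ≃ₗᵢ[ℝ] EuclideanSpace ℝ (Fin N),
      Measure.map (fun ω x => F ω (sphereMap O x)) μ = Measure.map F μ)
    (t : sphereN N) (G : Set ℝ) (hG : MeasurableSet G) :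
    μ {ω | F ω t ∈ G} = μ {ω | F ω (nPole N hN) ∈ G} := by
  set v : EuclideanSpace ℝ (Fin N) := (nPole N hN : EuclideanSpace ℝ (Fin N)) with hv
  have hnorm : ‖v‖ = ‖(t : EuclideanSpace ℝ (Fin N))‖ := by
    rw [norm_sphereN, norm_sphereN]
  set O : EuclideanSpace ℝ (Fin N) ≃ₗᵢ[ℝ] EuclideanSpace ℝ (Fin N) :=
    Submodule.reflection (ℝ ∙ (v - (t : EuclideanSpace ℝ (Fin N))))ᗮ with hOdef
  have hO : sphereMap O (nPole N hN) = t := Subtype.ext (Submodule.reflection_sub hnorm)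
  have hm1 : Measurable fun g : sphereN N → ℝ => g (nPole N hN) := measurable_pi_apply _
  have hm2 : Measurable (fun ω x => F ω (sphereMap O x)) :=
    measurable_pi_lambda _ (fun x => (measurable_pi_apply _).comp hmeas)
  have hGset : MeasurableSet {g : sphereN N → ℝ | g (nPole N hN) ∈ G} := hm1 hG
  calc μ {ω | F ω t ∈ G}
      = Measure.map (fun ω x => F ω (sphereMap O x)) μ {g | g (nPole N hN) ∈ G} := by
        rw [Measure.map_apply hm2 hGset]
        congr 1
        ext ω
        simp [Set.preimage, hO]
    _ = Measure.map F μ {g | g (nPole N hN) ∈ G} := by rw [hiso O]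
    _ = μ {ω | F ω (nPole N hN) ∈ G} := by
        rw [Measure.map_apply hmeas hGset]; rfl
lemma final_real_arith (Tc C₁ C₂ c₁ c₂ f X Y : ℝ) (hTc0 : 0 ≤ Tc)
    (hTc : Tc ≤ Real.exp (c₁/2 * X)) (hC₁ : 0 < C₁) (hC₂ : 0 < C₂)
    (hf1 : f ≤ c₁/2) (hf2 : f ≤ c₂) (hX : 0 ≤ X) :
    Tc * (C₁ * Real.exp (-c₁ * X)) + C₂ * Real.exp (-c₂ * X)
      ≤ (C₁ + C₂ + Real.exp (f * Y)) * Real.exp (-f * X) := by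
  have e1 : Tc * (C₁ * Real.exp (-c₁ * X)) ≤ C₁ * Real.exp (-(c₁/2) * X) := by
    have e2 : Real.exp (c₁/2 * X) * Real.exp (-c₁ * X) = Real.exp (-(c₁/2) * X) := by
      rw [← Real.exp_add]; ring_nf
    calc Tc * (C₁ * Real.exp (-c₁ * X))
        ≤ Real.exp (c₁/2 * X) * (C₁ * Real.exp (-c₁ * X)) :=
          mul_le_mul_of_nonneg_right hTc (by positivity)
      _ = C₁ * Real.exp (-(c₁/2) * X) := by rw [← mul_assoc, mul_comm _ C₁, mul_assoc, e2]
  have e3 : Real.exp (-(c₁/2) * X) ≤ Real.exp (-f * X) :=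
    Real.exp_le_exp.mpr (by nlinarith)
  have e4 : Real.exp (-c₂ * X) ≤ Real.exp (-f * X) :=
    Real.exp_le_exp.mpr (by nlinarith)
  have e5 : (0:ℝ) < Real.exp (-f * X) := Real.exp_pos _
  nlinarith [mul_le_mul_of_nonneg_left e3 hC₁.le, mul_le_mul_of_nonneg_left e4 hC₂.le,
    Real.exp_pos (f * Y)]

lemma small_N_arith (C₁ C₂ f X Y : ℝ) (hC₁ : 0 < C₁) (hC₂ : 0 < C₂) (hf : 0 < f)
    (hXY : X ≤ Y) : 1 ≤ (C₁ + C₂ + Real.exp (f * Y)) * Real.exp (-f * X) := by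
  have h2 : (1:ℝ) ≤ Real.exp (f * Y) * Real.exp (-f * X) := by
    rw [← Real.exp_add]
    apply Real.one_le_exp
    nlinarith
  nlinarith [Real.exp_pos (-f * X)]

lemma card_bound_exp {N : ℕ} (hN1 : 1 ≤ N) (α δ c₁ : ℝ) (hα : 0 < α) (hδ : 0 < δ)
    (hc₁ : 0 < c₁) (Tc : ℝ)
    (hTc : Tc ≤ ((Real.sqrt N + Real.sqrt (2 * (N:ℝ) ^ ((1:ℝ) - α)) / 2)
      / (Real.sqrt (2 * (N:ℝ) ^ ((1:ℝ) - α)) / 2)) ^ N)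
    (gb : Real.log 3 ≤ c₁/4 * (N:ℝ)^(2*δ)) (gc : α/(2*δ) ≤ c₁/4 * (N:ℝ)^δ) :
    Tc ≤ Real.exp (c₁/2 * (N:ℝ)^((1:ℝ)+2*δ)) := by
  have hNpos : (0:ℝ) < N := by exact_mod_cast (by omega : 0 < N)
  have hN1R : (1:ℝ) ≤ N := by exact_mod_cast hN1
  set ε : ℝ := Real.sqrt (2 * (N:ℝ) ^ ((1:ℝ) - α)) with hεdef
  have hεpos : 0 < ε := Real.sqrt_pos.mpr (by positivity)
  have hαpos : (0:ℝ) < (N:ℝ)^(α/2) := Real.rpow_pos_of_pos hNpos _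
  have hεb : ε * (N:ℝ)^(α/2) = Real.sqrt 2 * Real.sqrt (N:ℝ) := by
    have h1 : (N:ℝ)^(α/2) = Real.sqrt ((N:ℝ)^α) := by
      rw [Real.sqrt_eq_rpow, ← Real.rpow_mul hNpos.le]
      ring_nf
    rw [hεdef, h1, ← Real.sqrt_mul (by positivity), ← Real.sqrt_mul (by norm_num)]
    congr 1
    rw [mul_assoc, ← Real.rpow_add hNpos]
    norm_num
  have hε2 : ε ≤ Real.sqrt 2 * Real.sqrt (N:ℝ) := by
    rw [hεdef, ← Real.sqrt_mul (by norm_num : (0:ℝ) ≤ 2)]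
    apply Real.sqrt_le_sqrt
    have : (N:ℝ)^((1:ℝ)-α) ≤ (N:ℝ)^(1:ℝ) :=
      Real.rpow_le_rpow_of_exponent_le hN1R (by linarith)
    rw [Real.rpow_one] at this
    nlinarith
  have hs2 : (1:ℝ) ≤ Real.sqrt 2 := by
    rw [show (1:ℝ) = Real.sqrt 1 by simp]
    exact Real.sqrt_le_sqrt (by norm_num)
  have hb : (Real.sqrt N + ε/2)/(ε/2) ≤ 3 * (N:ℝ)^(α/2) := by
    rw [div_le_iff₀ (by positivity)]
    have h3 : 3 * (N:ℝ)^(α/2) * (ε/2) = 3/2 * (Real.sqrt 2 * Real.sqrt (N:ℝ)) := by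
      rw [← hεb]; ring
    rw [h3]
    nlinarith [mul_nonneg (sub_nonneg.mpr hs2) (Real.sqrt_nonneg (N:ℝ)),
      Real.sqrt_nonneg (N:ℝ)]
  have hbpow : Tc ≤ (3 * (N:ℝ)^(α/2)) ^ N :=
    hTc.trans (pow_le_pow_left₀ (by positivity) hb N)
  have hexp : (3 * (N:ℝ)^(α/2)) ^ N
      = Real.exp (Real.log (3 * (N:ℝ)^(α/2)) * N) := by
    rw [← Real.rpow_natCast (3 * (N:ℝ)^(α/2)) N, Real.rpow_def_of_pos (by positivity)]
  have hlog : Real.log (3 * (N:ℝ)^(α/2)) = Real.log 3 + α/2 * Real.log N := by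
    rw [Real.log_mul (by norm_num) (ne_of_gt hαpos), Real.log_rpow hNpos]
  have hlogN : Real.log (N:ℝ) ≤ (N:ℝ)^δ / δ := Real.log_le_rpow_div hNpos.le hδ
  have hNδ : (0:ℝ) < (N:ℝ)^δ := Real.rpow_pos_of_pos hNpos _
  have hN2δ : (N:ℝ)^δ * (N:ℝ)^δ = (N:ℝ)^(2*δ) := by
    rw [← Real.rpow_add hNpos]; ring_nf
  have hNe2 : (N:ℝ)^(2*δ) * (N:ℝ) = (N:ℝ)^((1:ℝ)+2*δ) := by
    nth_rewrite 2 [show (N:ℝ) = (N:ℝ)^(1:ℝ) by rw [Real.rpow_one]]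
    rw [← Real.rpow_add hNpos]; ring_nf
  have hkey : Real.log (3 * (N:ℝ)^(α/2)) * N ≤ c₁/2 * (N:ℝ)^((1:ℝ)+2*δ) := by
    rw [hlog]
    have t1 : α/2 * Real.log N ≤ c₁/4 * (N:ℝ)^(2*δ) := by
      have s1 : α/2 * Real.log N ≤ α/2 * ((N:ℝ)^δ / δ) :=
        mul_le_mul_of_nonneg_left hlogN (by positivity)
      have s2 : α/2 * ((N:ℝ)^δ / δ) = (α/(2*δ)) * (N:ℝ)^δ := by
        field_simp
      have s3 : (α/(2*δ)) * (N:ℝ)^δ ≤ (c₁/4 * (N:ℝ)^δ) * (N:ℝ)^δ :=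
        mul_le_mul_of_nonneg_right gc hNδ.le
      rw [s2] at s1
      calc α/2 * Real.log N ≤ (c₁/4 * (N:ℝ)^δ) * (N:ℝ)^δ := le_trans s1 s3
        _ = c₁/4 * (N:ℝ)^(2*δ) := by rw [mul_assoc, hN2δ]
    have t2 : Real.log 3 + α/2 * Real.log N ≤ c₁/2 * (N:ℝ)^(2*δ) := by linarith
    calc (Real.log 3 + α/2 * Real.log N) * N ≤ (c₁/2 * (N:ℝ)^(2*δ)) * N :=
          mul_le_mul_of_nonneg_right t2 hNpos.le
      _ = c₁/2 * (N:ℝ)^((1:ℝ)+2*δ) := by rw [mul_assoc, hNe2]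
  calc Tc ≤ (3 * (N:ℝ)^(α/2)) ^ N := hbpow
    _ = Real.exp (Real.log (3 * (N:ℝ)^(α/2)) * N) := hexp
    _ ≤ Real.exp (c₁/2 * (N:ℝ)^((1:ℝ)+2*δ)) := Real.exp_le_exp.mpr hkey

lemma sup_lt_of_net {N : ℕ} (hN1 : 1 ≤ N) (α δ c m0 : ℝ) (hc : 0 < c)
    (g : sphereN N → ℝ) (hg : Continuous g) (hpos : ∀ x, 0 ≤ g x)
    (T : Finset (EuclideanSpace ℝ (Fin N))) (hTs : ∀ t ∈ T, t ∈ sphereN N)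
    (hTnet : ∀ x ∈ sphereN N, ∃ t ∈ T, dist x t ≤ Real.sqrt (2 * (N:ℝ) ^ ((1:ℝ) - α)))
    (hm0le : m0 ≤ c/4 * (N:ℝ)^((1:ℝ)/2+δ))
    (hT1 : ∀ t (ht : t ∈ T), |g ⟨t, hTs t ht⟩ - m0| < c/2 * (N:ℝ)^((1:ℝ)/2+δ))
    (hD : sSup {r : ℝ | ∃ x y : sphereN N,
        1 - (N:ℝ)^(-α) ≤ overlap x y ∧ r = |g x ^ 2 - g y ^ 2|}
      < c^2/4 * (N:ℝ)^((1:ℝ)+2*δ)) :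
    (⨆ x : sphereN N, g x) < c * (N:ℝ)^((1:ℝ)/2+δ) := by
  have hNpos : (0:ℝ) < N := by exact_mod_cast (by omega : 0 < N)
  have hNs : (0:ℝ) < (N:ℝ)^((1:ℝ)/2+δ) := Real.rpow_pos_of_pos hNpos _
  obtain ⟨M, hM⟩ := exists_bound_modset hN1 g hg
  have hbdd : BddAbove {r : ℝ | ∃ x y : sphereN N,
      1 - (N:ℝ)^(-α) ≤ overlap x y ∧ r = |g x ^ 2 - g y ^ 2|} := by
    refine ⟨2 * M^2, ?_⟩
    rintro r ⟨x, y, -, rfl⟩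
    have hx2 : (g x)^2 ≤ M^2 := by
      rw [← sq_abs]; exact pow_le_pow_left₀ (abs_nonneg _) (hM x) 2
    have hy2 : (g y)^2 ≤ M^2 := by
      rw [← sq_abs]; exact pow_le_pow_left₀ (abs_nonneg _) (hM y) 2
    calc |g x ^ 2 - g y ^ 2| ≤ |g x ^ 2| + |g y ^ 2| := abs_sub _ _
      _ = g x ^ 2 + g y ^ 2 := by
          rw [abs_of_nonneg (sq_nonneg _), abs_of_nonneg (sq_nonneg _)]
      _ ≤ 2 * M^2 := by linarith
  have hNs2 : (N:ℝ)^((1:ℝ)/2+δ) * (N:ℝ)^((1:ℝ)/2+δ) = (N:ℝ)^((1:ℝ)+2*δ) := by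
    rw [← Real.rpow_add hNpos]; ring_nf
  have hxbd : ∀ x : sphereN N, g x ≤ 15/16 * c * (N:ℝ)^((1:ℝ)/2+δ) := by
    intro x
    obtain ⟨t, htT, hdist⟩ := hTnet x.1 x.2
    have hov : 1 - (N:ℝ)^(-α) ≤ overlap x ⟨t, hTs t htT⟩ :=
      overlap_of_dist_le hN1 α x ⟨t, hTs t htT⟩ hdist
    have hmem : |g x ^ 2 - g ⟨t, hTs t htT⟩ ^ 2| ∈ {r : ℝ | ∃ x y : sphereN N,
        1 - (N:ℝ)^(-α) ≤ overlap x y ∧ r = |g x ^ 2 - g y ^ 2|} :=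
      ⟨x, ⟨t, hTs t htT⟩, hov, rfl⟩
    have hr : |g x ^ 2 - g ⟨t, hTs t htT⟩ ^ 2| < c^2/4 * (N:ℝ)^((1:ℝ)+2*δ) :=
      lt_of_le_of_lt (le_csSup hbdd hmem) hD
    have ht'lt : |g ⟨t, hTs t htT⟩ - m0| < c/2 * (N:ℝ)^((1:ℝ)/2+δ) := hT1 t htT
    have hFt : g ⟨t, hTs t htT⟩ ≤ 3/4 * c * (N:ℝ)^((1:ℝ)/2+δ) := by
      have h := abs_lt.mp ht'lt
      linarith [h.2, hm0le]
    have hFt2 : g ⟨t, hTs t htT⟩ ^ 2 ≤ (3/4 * c * (N:ℝ)^((1:ℝ)/2+δ))^2 :=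
      pow_le_pow_left₀ (hpos _) hFt 2
    have hFx2 : g x ^ 2 ≤ (15/16 * c * (N:ℝ)^((1:ℝ)/2+δ))^2 := by
      nlinarith [le_abs_self (g x ^ 2 - g ⟨t, hTs t htT⟩ ^ 2), hr, hFt2, hNs2,
        hNs, hc, sq_nonneg (c * (N:ℝ)^((1:ℝ)/2+δ))]
    have h15 : (0:ℝ) ≤ 15/16 * c * (N:ℝ)^((1:ℝ)/2+δ) := by positivity
    nlinarith [hpos x, hFx2, h15]
  haveI : Nonempty (sphereN N) := ⟨nPole N (by omega)⟩
  have hsup : (⨆ x : sphereN N, g x) ≤ 15/16 * c * (N:ℝ)^((1:ℝ)/2+δ) := ciSup_le hxbd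
  nlinarith [hNs, hc, hsup]

set_option maxHeartbeats 1000000 in
/-- **From pointwise concentration and continuity to a uniform bound (nonnegative
case).** If `F_N` is an a.s. nonnegative isotropic random continuous field on `S^N`
with `E[F_N(𝐧)] ≤ K√N`, which (1) concentrates at scale `N^{1/2+δ}` at the north pole
and (2') has a modulus-of-continuity bound for `F_N²` at scale `N^{1+2δ}` on pairs of
points with overlap at least `1 − N^{−α}`, then
`P(sup_{S^N} F_N ≥ c N^{1/2+δ}) ≤ C exp(−f N^{1+2δ})`. -/
theorem isotropic_field_uniform_bound_nonneg
    (Ω : ℕ → Type) (m : ∀ N, MeasurableSpace (Ω N)) (μ : ∀ N, Measure (Ω N))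
    (hprob : ∀ N, IsProbabilityMeasure (μ N))
    (F : ∀ N, Ω N → sphereN N → ℝ)
    (hcont : ∀ N ω, Continuous (F N ω))
    (hmeas : ∀ N, Measurable (F N))
    (hiso : ∀ N (O : EuclideanSpace ℝ (Fin N) ≃ₗᵢ[ℝ] EuclideanSpace ℝ (Fin N)),
      Measure.map (fun ω x => F N ω (sphereMap O x)) (μ N) = Measure.map (F N) (μ N))
    (hnonneg : ∀ N, ∀ᵐ ω ∂μ N, ∀ x, 0 ≤ F N ω x)
    (K : ℝ) (hK : 0 < K)
    (hmean : ∀ N, ∀ hN : 2 ≤ N,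
      (∫ ω, F N ω (nPole N (by omega)) ∂μ N) ≤ K * Real.sqrt N)
    (α : ℝ) (hα : 0 < α)
    (hpoint : ∀ c > (0 : ℝ), ∀ δ > (0 : ℝ), ∃ c₁ > (0 : ℝ), ∃ C₁ > (0 : ℝ),
      ∀ N, ∀ hN : 2 ≤ N,
        μ N {ω | c * (N : ℝ) ^ ((1 : ℝ) / 2 + δ) ≤
            |F N ω (nPole N (by omega)) - ∫ ω', F N ω' (nPole N (by omega)) ∂μ N|}
          ≤ ENNReal.ofReal (C₁ * Real.exp (-c₁ * (N : ℝ) ^ ((1 : ℝ) + 2 * δ))))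
    (hmodsq : ∀ c > (0 : ℝ), ∀ δ > (0 : ℝ), ∃ c₂ > (0 : ℝ), ∃ C₂ > (0 : ℝ),
      ∀ N, 2 ≤ N →
        μ N {ω | c * (N : ℝ) ^ ((1 : ℝ) + 2 * δ) ≤
            sSup {r : ℝ | ∃ x y : sphereN N,
              1 - (N : ℝ) ^ (-α) ≤ overlap x y ∧
              r = |(F N ω x) ^ 2 - (F N ω y) ^ 2|}}
          ≤ ENNReal.ofReal (C₂ * Real.exp (-c₂ * (N : ℝ) ^ ((1 : ℝ) + 2 * δ)))) :
    ∀ c > (0 : ℝ), ∀ δ > (0 : ℝ), ∃ f > (0 : ℝ), ∃ C > (0 : ℝ),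
      ∀ N, 2 ≤ N →
        μ N {ω | c * (N : ℝ) ^ ((1 : ℝ) / 2 + δ) ≤ ⨆ x : sphereN N, F N ω x}
          ≤ ENNReal.ofReal (C * Real.exp (-f * (N : ℝ) ^ ((1 : ℝ) + 2 * δ))) := by
  intro c hc δ hδ
  obtain ⟨c₁, hc₁, C₁, hC₁, hp1⟩ := hpoint (c/2) (by positivity) δ hδ
  obtain ⟨c₂, hc₂, C₂, hC₂, hp2⟩ := hmodsq (c^2/4) (by positivity) δ hδ
  have hf : (0:ℝ) < min c₁ c₂ / 2 := div_pos (lt_min hc₁ hc₂) two_pos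
  have htδ : Filter.Tendsto (fun n : ℕ => (n:ℝ) ^ δ) Filter.atTop Filter.atTop :=
    (tendsto_rpow_atTop hδ).comp tendsto_natCast_atTop_atTop
  have ht2δ : Filter.Tendsto (fun n : ℕ => (n:ℝ) ^ (2*δ)) Filter.atTop Filter.atTop :=
    (tendsto_rpow_atTop (by positivity)).comp tendsto_natCast_atTop_atTop
  have hev : ∀ᶠ n : ℕ in Filter.atTop,
      (4*K/c ≤ (n:ℝ)^δ) ∧ (Real.log 3 ≤ (c₁/4) * (n:ℝ)^(2*δ))
        ∧ (α/(2*δ) ≤ (c₁/4) * (n:ℝ)^δ) := by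
    have h1 := htδ.eventually_ge_atTop (4*K/c)
    have h2 := ht2δ.eventually_ge_atTop (Real.log 3 / (c₁/4))
    have h3 := htδ.eventually_ge_atTop (α/(2*δ) / (c₁/4))
    filter_upwards [h1, h2, h3] with n g1 g2 g3
    refine ⟨g1, ?_, ?_⟩
    · rw [div_le_iff₀ (by positivity)] at g2; linarith [g2]
    · rw [div_le_iff₀ (by positivity)] at g3; linarith [g3]
  obtain ⟨N₀, hN₀⟩ := Filter.eventually_atTop.mp hev
  refine ⟨min c₁ c₂ / 2, hf,
    C₁ + C₂ + Real.exp (min c₁ c₂ / 2 * (N₀:ℝ)^((1:ℝ)+2*δ)), by positivity, ?_⟩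
  intro N hN2
  by_cases hNbig : N₀ ≤ N
  · obtain ⟨ga, gb, gc⟩ := hN₀ N hNbig
    have hN1 : 1 ≤ N := by omega
    have hN0' : 0 < N := by omega
    have hNpos : (0:ℝ) < N := by exact_mod_cast hN0'
    have hNe : (0:ℝ) ≤ (N:ℝ)^((1:ℝ)+2*δ) := (Real.rpow_pos_of_pos hNpos _).le
    set ε : ℝ := Real.sqrt (2 * (N:ℝ) ^ ((1:ℝ) - α)) with hεdef
    have hεpos : 0 < ε := Real.sqrt_pos.mpr (by positivity)
    obtain ⟨T, hTs, hTnet, hTcard⟩ := exists_net N hN1 ε hεpos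
    set m0 : ℝ := ∫ ω', F N ω' (nPole N (by omega : 0 < N)) ∂μ N with hm0def
    -- mean bound
    have hm0le : m0 ≤ c/4 * (N:ℝ)^((1:ℝ)/2+δ) := by
      have h1 : m0 ≤ K * Real.sqrt N := hmean N hN2
      have h2 : Real.sqrt (N:ℝ) = (N:ℝ)^((1:ℝ)/2) := by
        rw [Real.sqrt_eq_rpow]
      have h3 : (N:ℝ)^((1:ℝ)/2+δ) = (N:ℝ)^((1:ℝ)/2) * (N:ℝ)^δ := Real.rpow_add hNpos _ _
      have h4 : (0:ℝ) < (N:ℝ)^((1:ℝ)/2) := Real.rpow_pos_of_pos hNpos _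
      have h5 : K * Real.sqrt N ≤ c/4 * (N:ℝ)^((1:ℝ)/2+δ) := by
        rw [h2, h3]
        have hga : 4*K/c ≤ (N:ℝ)^δ := ga
        rw [div_le_iff₀ hc] at hga
        nlinarith [h4]
      linarith
    -- inclusion of the target event in the three bad events
    have hsub : {ω | c * (N : ℝ) ^ ((1 : ℝ) / 2 + δ) ≤ ⨆ x : sphereN N, F N ω x}
        ⊆ {ω | ¬ ∀ x : sphereN N, 0 ≤ F N ω x}
          ∪ ((⋃ t : {y // y ∈ T},
              {ω | F N ω ⟨t.1, hTs t.1 t.2⟩ ∈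
                {r : ℝ | c/2 * (N:ℝ)^((1:ℝ)/2+δ) ≤ |r - m0|}})
            ∪ {ω | c^2/4 * (N : ℝ) ^ ((1 : ℝ) + 2 * δ) ≤
                sSup {r : ℝ | ∃ x y : sphereN N,
                  1 - (N : ℝ) ^ (-α) ≤ overlap x y ∧
                  r = |(F N ω x) ^ 2 - (F N ω y) ^ 2|}}) := by
      intro ω hω
      by_contra hcon
      simp only [Set.mem_union, not_or] at hcon
      obtain ⟨h0, h1, h2⟩ := hcon
      have hT1 : ∀ t (ht : t ∈ T), |F N ω ⟨t, hTs t ht⟩ - m0| < c/2 * (N:ℝ)^((1:ℝ)/2+δ) := by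
        intro t ht
        by_contra hge
        exact h1 (Set.mem_iUnion.mpr ⟨⟨t, ht⟩, not_lt.mp hge⟩)
      have hlt := sup_lt_of_net hN1 α δ c m0 hc (F N ω) (hcont N ω) (not_not.mp h0)
        T hTs hTnet hm0le hT1 (not_le.mp h2)
      have hω' : c * (N : ℝ) ^ ((1 : ℝ) / 2 + δ) ≤ ⨆ x : sphereN N, F N ω x := hω
      linarith
    -- measure bounds
    have hμ0 : μ N {ω | ¬ ∀ x : sphereN N, 0 ≤ F N ω x} = 0 := ae_iff.mp (hnonneg N)
    have hμ1 : μ N (⋃ t : {y // y ∈ T},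
          {ω | F N ω ⟨t.1, hTs t.1 t.2⟩ ∈
            {r : ℝ | c/2 * (N:ℝ)^((1:ℝ)/2+δ) ≤ |r - m0|}})
        ≤ (T.card : ℝ≥0∞) *
          ENNReal.ofReal (C₁ * Real.exp (-c₁ * (N : ℝ) ^ ((1 : ℝ) + 2 * δ))) := by
      have hGmeas : MeasurableSet {r : ℝ | c/2 * (N:ℝ)^((1:ℝ)/2+δ) ≤ |r - m0|} :=
        measurableSet_le measurable_const ((measurable_id.sub measurable_const).abs)
      have hone : ∀ t : {y // y ∈ T}, μ N {ω | F N ω ⟨t.1, hTs t.1 t.2⟩ ∈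
            {r : ℝ | c/2 * (N:ℝ)^((1:ℝ)/2+δ) ≤ |r - m0|}}
          ≤ ENNReal.ofReal (C₁ * Real.exp (-c₁ * (N : ℝ) ^ ((1 : ℝ) + 2 * δ))) := by
        intro t
        have heq := @law_transfer N hN0' (Ω N) (m N) (μ N) (F N) (hmeas N) (hiso N)
          ⟨t.1, hTs t.1 t.2⟩ {r : ℝ | c/2 * (N:ℝ)^((1:ℝ)/2+δ) ≤ |r - m0|} hGmeas
        rw [heq]
        exact hp1 N hN2
      calc μ N (⋃ t : {y // y ∈ T},
            {ω | F N ω ⟨t.1, hTs t.1 t.2⟩ ∈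
              {r : ℝ | c/2 * (N:ℝ)^((1:ℝ)/2+δ) ≤ |r - m0|}})
          ≤ ∑' t : {y // y ∈ T}, μ N {ω | F N ω ⟨t.1, hTs t.1 t.2⟩ ∈
              {r : ℝ | c/2 * (N:ℝ)^((1:ℝ)/2+δ) ≤ |r - m0|}} :=
            measure_iUnion_le _
        _ ≤ ∑' _t : {y // y ∈ T},
              ENNReal.ofReal (C₁ * Real.exp (-c₁ * (N : ℝ) ^ ((1 : ℝ) + 2 * δ))) :=
            ENNReal.tsum_le_tsum hone
        _ = (T.card : ℝ≥0∞) *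
              ENNReal.ofReal (C₁ * Real.exp (-c₁ * (N : ℝ) ^ ((1 : ℝ) + 2 * δ))) := by
            rw [tsum_fintype, Finset.sum_const, nsmul_eq_mul]
            congr 1
            simp [Fintype.card_coe]
    have hμ2 : μ N {ω | c^2/4 * (N : ℝ) ^ ((1 : ℝ) + 2 * δ) ≤
          sSup {r : ℝ | ∃ x y : sphereN N,
            1 - (N : ℝ) ^ (-α) ≤ overlap x y ∧
            r = |(F N ω x) ^ 2 - (F N ω y) ^ 2|}}
        ≤ ENNReal.ofReal (C₂ * Real.exp (-c₂ * (N : ℝ) ^ ((1 : ℝ) + 2 * δ))) :=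
      hp2 N hN2
    have hcard2 : (T.card : ℝ) ≤ Real.exp (c₁/2 * (N:ℝ)^((1:ℝ)+2*δ)) :=
      card_bound_exp hN1 α δ c₁ hα hδ hc₁ (T.card : ℝ) hTcard gb gc
    have hreal := final_real_arith (T.card : ℝ) C₁ C₂ c₁ c₂ (min c₁ c₂ / 2)
      ((N:ℝ)^((1:ℝ)+2*δ)) ((N₀:ℝ)^((1:ℝ)+2*δ)) (Nat.cast_nonneg _) hcard2 hC₁ hC₂
      (by have := min_le_left c₁ c₂; linarith)
      (by have := min_le_right c₁ c₂; linarith) hNe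
    calc μ N {ω | c * (N : ℝ) ^ ((1 : ℝ) / 2 + δ) ≤ ⨆ x : sphereN N, F N ω x}
        ≤ _ := measure_mono hsub
      _ ≤ μ N {ω | ¬ ∀ x : sphereN N, 0 ≤ F N ω x}
          + (μ N (⋃ t : {y // y ∈ T},
              {ω | F N ω ⟨t.1, hTs t.1 t.2⟩ ∈
                {r : ℝ | c/2 * (N:ℝ)^((1:ℝ)/2+δ) ≤ |r - m0|}})
            + μ N {ω | c^2/4 * (N : ℝ) ^ ((1 : ℝ) + 2 * δ) ≤
                sSup {r : ℝ | ∃ x y : sphereN N,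
                  1 - (N : ℝ) ^ (-α) ≤ overlap x y ∧
                  r = |(F N ω x) ^ 2 - (F N ω y) ^ 2|}}) :=
          (measure_union_le _ _).trans (add_le_add le_rfl (measure_union_le _ _))
      _ ≤ 0 + ((T.card : ℝ≥0∞) *
            ENNReal.ofReal (C₁ * Real.exp (-c₁ * (N : ℝ) ^ ((1 : ℝ) + 2 * δ)))
            + ENNReal.ofReal (C₂ * Real.exp (-c₂ * (N : ℝ) ^ ((1 : ℝ) + 2 * δ)))) := by
          rw [hμ0]
          exact add_le_add le_rfl (add_le_add hμ1 hμ2)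
      _ = ENNReal.ofReal ((T.card : ℝ) * (C₁ * Real.exp (-c₁ * (N : ℝ) ^ ((1 : ℝ) + 2 * δ)))
            + C₂ * Real.exp (-c₂ * (N : ℝ) ^ ((1 : ℝ) + 2 * δ))) := by
          rw [zero_add, ← ENNReal.ofReal_natCast T.card,
            ← ENNReal.ofReal_mul (Nat.cast_nonneg _),
            ← ENNReal.ofReal_add
              (mul_nonneg (Nat.cast_nonneg _) (mul_nonneg hC₁.le (Real.exp_nonneg _)))
              (mul_nonneg hC₂.le (Real.exp_nonneg _))]
      _ ≤ ENNReal.ofReal ((C₁ + C₂ + Real.exp (min c₁ c₂ / 2 * (N₀:ℝ)^((1:ℝ)+2*δ)))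
            * Real.exp (-(min c₁ c₂ / 2) * (N : ℝ) ^ ((1 : ℝ) + 2 * δ))) :=
          ENNReal.ofReal_le_ofReal hreal
  · haveI := hprob N
    have h1 : μ N {ω | c * (N : ℝ) ^ ((1 : ℝ) / 2 + δ) ≤ ⨆ x : sphereN N, F N ω x} ≤ 1 :=
      prob_le_one
    refine h1.trans ?_
    rw [show (1:ℝ≥0∞) = ENNReal.ofReal 1 by simp]
    apply ENNReal.ofReal_le_ofReal
    push_neg at hNbig
    have hNN0 : (N:ℝ) ^ ((1:ℝ)+2*δ) ≤ (N₀:ℝ) ^ ((1:ℝ)+2*δ) :=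
      Real.rpow_le_rpow (by positivity) (by exact_mod_cast hNbig.le) (by positivity)
    exact small_N_arith C₁ C₂ (min c₁ c₂ / 2) _ _ hC₁ hC₂ hf hNN0
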